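/- For any bounded linear operator A on a complex Hilbert space, the numerical radius equals w(A) = sup over real θ of ‖Re(e^{iθ}A)‖, where Re(T) = (T + T*)/2. -/

import Mathlib

noncomputable section
open ContinuousLinearMap

variable {H : Type*} [NormedAddCommGroup H] [InnerProductSpace ℂ H] [CompleteSpace H]

/-- The numerical radius of a bounded operator. -/
def nrad (A : H →L[ℂ] H) : ℝ :=
  sSup {r : ℝ | ∃ x : H, ‖x‖ = 1 ∧ r = ‖(inner ℂ (A x) x : ℂ)‖}

/-- The absolute value |A| = (A*A)^(1/2) via continuous functional calculus. -/
def oabs (A : H →L[ℂ] H) : H →L[ℂ] H := cfc Real.sqrt (adjoint A * A)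

/-- The 2×2 block operator matrix [[A,B],[C,D]] on the Hilbert space H ⊕ H. -/
def blk (A B C D : H →L[ℂ] H) : WithLp 2 (H × H) →L[ℂ] WithLp 2 (H × H) :=
  ((WithLp.prodContinuousLinearEquiv 2 ℂ H H).symm.toContinuousLinearMap).comp
    ((((A.comp (fst ℂ H H)) + B.comp (snd ℂ H H)).prod
      ((C.comp (fst ℂ H H)) + D.comp (snd ℂ H H))).comp
      (WithLp.prodContinuousLinearEquiv 2 ℂ H H).toContinuousLinearMap)

lemma sa_norm_le {T : H →L[ℂ] H} (hT : IsSelfAdjoint T) {M : ℝ} (hM : 0 ≤ M)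
    (h : ∀ x : H, ‖(inner ℂ (T x) x : ℂ)‖ ≤ M * ‖x‖ ^ 2) : ‖T‖ ≤ M := by
  have hsym := (isSelfAdjoint_iff_isSymmetric.mp hT)
  have pol : ∀ x y : H, (inner ℂ (T (x+y)) (x+y) : ℂ) - inner ℂ (T (x-y)) (x-y)
      = 2 * (inner ℂ (T x) y + (starRingEnd ℂ) (inner ℂ (T x) y : ℂ)) := by
    intro x y
    have h1 : (inner ℂ (T y) x : ℂ) = (starRingEnd ℂ) (inner ℂ (T x) y : ℂ) := by
      rw [hsym.apply_clm y x, ← inner_conj_symm]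
    simp only [map_add, map_sub, inner_add_left, inner_add_right, inner_sub_left,
      inner_sub_right, h1]
    ring
  have key : ∀ x y : H, 4 * (inner ℂ (T x) y : ℂ).re ≤ 2 * M * (‖x‖ ^ 2 + ‖y‖ ^ 2) := by
    intro x y
    have h2 : (4 : ℝ) * (inner ℂ (T x) y : ℂ).re
        = ((inner ℂ (T (x+y)) (x+y) : ℂ) - inner ℂ (T (x-y)) (x-y)).re := by
      rw [pol]
      rw [Complex.add_conj]
      simp
      ring
    rw [h2]
    have h3 : ((inner ℂ (T (x+y)) (x+y) : ℂ) - inner ℂ (T (x-y)) (x-y)).re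
        ≤ ‖(inner ℂ (T (x+y)) (x+y) : ℂ)‖ + ‖(inner ℂ (T (x-y)) (x-y) : ℂ)‖ := by
      rw [Complex.sub_re]
      have a1 := Complex.re_le_norm (inner ℂ (T (x+y)) (x+y) : ℂ)
      have a2 := Complex.abs_re_le_norm (inner ℂ (T (x-y)) (x-y) : ℂ)
      cases abs_le.mp a2; linarith
    have h4 := h (x + y)
    have h5 := h (x - y)
    have par : ‖x + y‖ ^ 2 + ‖x - y‖ ^ 2 = 2 * (‖x‖ ^ 2 + ‖y‖ ^ 2) := by
      have := parallelogram_law_with_norm ℂ x y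
      nlinarith [this]
    nlinarith [h3, h4, h5, par]
  have hx : ∀ x : H, ‖T x‖ ≤ M * ‖x‖ := by
    intro x
    rcases eq_or_ne (T x) 0 with h0 | h0
    · simp [h0, mul_nonneg hM (norm_nonneg x)]
    · have hTx : (0:ℝ) < ‖T x‖ := norm_pos_iff.mpr h0
      set y := (‖x‖ / ‖T x‖ : ℝ) • T x with hy
      have hny : ‖y‖ = ‖x‖ := by
        rw [hy, norm_smul]
        simp [abs_of_nonneg (div_nonneg (norm_nonneg x) (norm_nonneg _)),
          div_mul_cancel₀, hTx.ne']
      have hre : (inner ℂ (T x) y : ℂ).re = ‖x‖ * ‖T x‖ := by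
        have h9 : (inner ℂ (T x) ((‖x‖ / ‖T x‖ : ℝ) • T x) : ℂ).re
            = (‖x‖ / ‖T x‖) * ‖T x‖ ^ 2 := by
          rw [← algebraMap_smul ℂ (‖x‖ / ‖T x‖ : ℝ) (T x), Complex.coe_algebraMap,
            inner_smul_right]
          rw [show (((‖x‖ / ‖T x‖ : ℝ):ℂ) * (inner ℂ (T x) (T x) : ℂ)).re
              = RCLike.re ((RCLike.ofReal (‖x‖ / ‖T x‖ : ℝ) : ℂ)
                * (inner ℂ (T x) (T x) : ℂ)) from rfl]
          rw [RCLike.re_ofReal_mul, inner_self_eq_norm_sq]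
        rw [hy, h9]
        field_simp
      have := key x y
      have hnx : (0:ℝ) < ‖x‖ := by
        rcases eq_or_ne x 0 with rfl | hx0
        · exact absurd (map_zero T) h0
        · exact norm_pos_iff.mpr hx0
      rw [hre, hny] at this
      nlinarith [this, hnx]
  exact opNorm_le_bound T hM hx

lemma inner_reop (A : H →L[ℂ] H) (c : ℂ) (x : H) :
    (inner ℂ (((1 / 2 : ℝ) • (c • A + adjoint (c • A))) x) x : ℂ)
      = ((((starRingEnd ℂ) c * inner ℂ (A x) x).re : ℝ) : ℂ) := by
  have hadj : (inner ℂ ((adjoint (c • A)) x) x : ℂ)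
      = c * (starRingEnd ℂ) (inner ℂ (A x) x : ℂ) := by
    rw [adjoint_inner_left, smul_apply, inner_smul_right, inner_conj_symm]
  have hsm : (inner ℂ ((c • A) x) x : ℂ)
      = (starRingEnd ℂ) c * (inner ℂ (A x) x : ℂ) := by
    rw [smul_apply, inner_smul_left]
  rw [smul_apply, ← algebraMap_smul ℂ (1/2 : ℝ), Complex.coe_algebraMap,
    inner_smul_left, add_apply, inner_add_left, hadj, hsm, Complex.conj_ofReal]
  have h2 : c * (starRingEnd ℂ) (inner ℂ (A x) x : ℂ)
      = (starRingEnd ℂ) ((starRingEnd ℂ) c * (inner ℂ (A x) x : ℂ)) := by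
    rw [map_mul, Complex.conj_conj]
  rw [h2, Complex.add_conj]
  push_cast
  ring

lemma nrad_nonneg (A : H →L[ℂ] H) : 0 ≤ nrad A :=
  Real.sSup_nonneg (by rintro r ⟨x, -, rfl⟩; exact norm_nonneg _)

lemma nrad_bound (A : H →L[ℂ] H) (x : H) :
    ‖(inner ℂ (A x) x : ℂ)‖ ≤ nrad A * ‖x‖ ^ 2 := by
  rcases eq_or_ne x 0 with rfl | hx0
  · simp
  · have hnx : (0:ℝ) < ‖x‖ := norm_pos_iff.mpr hx0
    set u : H := (‖x‖⁻¹ : ℝ) • x with hu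
    have hnu : ‖u‖ = 1 := by
      rw [hu, norm_smul, norm_inv, norm_norm, inv_mul_cancel₀ hnx.ne']
    have hbdd : BddAbove {r : ℝ | ∃ y : H, ‖y‖ = 1 ∧ r = ‖(inner ℂ (A y) y : ℂ)‖} := by
      refine ⟨‖A‖, ?_⟩
      rintro r ⟨y, hy, rfl⟩
      calc ‖(inner ℂ (A y) y : ℂ)‖ ≤ ‖A y‖ * ‖y‖ := norm_inner_le_norm _ _
        _ ≤ ‖A‖ * ‖y‖ * ‖y‖ := by gcongr; exact le_opNorm A y
        _ = ‖A‖ := by rw [hy]; ring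
    have hmem : ‖(inner ℂ (A u) u : ℂ)‖ ≤ nrad A :=
      le_csSup hbdd ⟨u, hnu, rfl⟩
    have hscale : (inner ℂ (A x) x : ℂ) = ((‖x‖ ^ 2 : ℝ) : ℂ) • (inner ℂ (A u) u : ℂ) := by
      have hx : x = (‖x‖ : ℝ) • u := by
        rw [hu, smul_smul, mul_inv_cancel₀ hnx.ne', one_smul]
      nth_rw 1 [hx]; nth_rw 2 [hx]
      rw [map_smul_of_tower]
      rw [← algebraMap_smul ℂ (‖x‖ : ℝ) (A u), Complex.coe_algebraMap,
        ← algebraMap_smul ℂ (‖x‖ : ℝ) u, Complex.coe_algebraMap]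
      rw [inner_smul_left, inner_smul_right, Complex.conj_ofReal, smul_eq_mul]
      push_cast
      ring
    rw [hscale, norm_smul, Complex.norm_real, Real.norm_eq_abs,
      abs_of_nonneg (sq_nonneg _), mul_comm]
    exact mul_le_mul_of_nonneg_right hmem (sq_nonneg _)

lemma adjoint_smul' (c : ℂ) (B : H →L[ℂ] H) :
    adjoint (c • B) = (starRingEnd ℂ) c • adjoint B :=
  map_smulₛₗ (adjoint : (H →L[ℂ] H) ≃ₗᵢ⋆[ℂ] (H →L[ℂ] H)) c B

lemma sa_op (A : H →L[ℂ] H) (c : ℂ) :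
    IsSelfAdjoint ((1 / 2 : ℝ) • (c • A + adjoint (c • A))) := by
  rw [isSelfAdjoint_iff']
  rw [← algebraMap_smul ℂ ((1:ℝ)/2) (c • A + adjoint (c • A)), Complex.coe_algebraMap]
  rw [adjoint_smul', map_add, adjoint_adjoint, add_comm, Complex.conj_ofReal]

theorem stmt_5 (A : H →L[ℂ] H) :
    nrad A = ⨆ θ : ℝ, ‖(1 / 2 : ℝ) • (Complex.exp (θ * Complex.I) • A
      + adjoint (Complex.exp (θ * Complex.I) • A))‖ := by
  set f : ℝ → ℝ := fun θ => ‖(1 / 2 : ℝ) • (Complex.exp (θ * Complex.I) • A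
      + adjoint (Complex.exp (θ * Complex.I) • A))‖ with hf
  have habs : ∀ θ : ℝ, ‖Complex.exp (θ * Complex.I)‖ = 1 := fun θ =>
    Complex.norm_exp_ofReal_mul_I θ
  have hfbd : ∀ θ, f θ ≤ ‖A‖ := by
    intro θ
    have hc : ‖Complex.exp ((θ:ℂ) * Complex.I) • A‖ = ‖A‖ := by
      rw [norm_smul, habs, one_mul]
    calc f θ ≤ ‖(1/2:ℝ)‖ * (‖Complex.exp ((θ:ℂ) * Complex.I) • A‖
          + ‖adjoint (Complex.exp ((θ:ℂ) * Complex.I) • A)‖) := by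
          rw [hf]; dsimp only; rw [norm_smul]; gcongr; exact norm_add_le _ _
      _ = ‖A‖ := by
          rw [LinearIsometryEquiv.norm_map, hc]
          rw [show ‖(1/2 : ℝ)‖ = 1/2 by norm_num]
          ring
  have hBdd : BddAbove (Set.range f) := ⟨‖A‖, by rintro r ⟨θ, rfl⟩; exact hfbd θ⟩
  apply le_antisymm
  · apply Real.sSup_le
    · rintro r ⟨x, hx, rfl⟩
      set z : ℂ := inner ℂ (A x) x with hz
      set θ := z.arg with hθ
      have hkey : (starRingEnd ℂ) (Complex.exp ((θ:ℂ) * Complex.I)) * z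
          = ((‖z‖ : ℝ) : ℂ) := by
        have h1 : ((‖z‖ : ℝ):ℂ) * Complex.exp ((θ:ℂ) * Complex.I) = z :=
          Complex.norm_mul_exp_arg_mul_I z
        have h2 : (starRingEnd ℂ) (Complex.exp ((θ:ℂ) * Complex.I))
            * Complex.exp ((θ:ℂ) * Complex.I) = 1 := by
          rw [Complex.conj_mul']
          norm_cast
          rw [habs, one_pow]
        calc (starRingEnd ℂ) (Complex.exp ((θ:ℂ) * Complex.I)) * z
            = (starRingEnd ℂ) (Complex.exp ((θ:ℂ) * Complex.I))
              * (((‖z‖ : ℝ):ℂ) * Complex.exp ((θ:ℂ) * Complex.I)) := by rw [h1]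
          _ = ((‖z‖ : ℝ):ℂ)
              * ((starRingEnd ℂ) (Complex.exp ((θ:ℂ) * Complex.I))
                * Complex.exp ((θ:ℂ) * Complex.I)) := by ring
          _ = ((‖z‖ : ℝ):ℂ) := by rw [h2, mul_one]
      have hcalc : ‖z‖ ≤ f θ := by
        calc ‖z‖ = ‖(inner ℂ (((1 / 2 : ℝ) • (Complex.exp ((θ:ℂ) * Complex.I) • A
              + adjoint (Complex.exp ((θ:ℂ) * Complex.I) • A))) x) x : ℂ)‖ := by
              rw [inner_reop, ← hz, hkey, Complex.ofReal_re, Complex.norm_real,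
                Real.norm_eq_abs, abs_of_nonneg (norm_nonneg z)]
          _ ≤ ‖((1 / 2 : ℝ) • (Complex.exp ((θ:ℂ) * Complex.I) • A
              + adjoint (Complex.exp ((θ:ℂ) * Complex.I) • A))) x‖ * ‖x‖ :=
              norm_inner_le_norm _ _
          _ ≤ f θ * ‖x‖ * ‖x‖ := by gcongr; exact le_opNorm _ x
          _ = f θ := by rw [hx]; ring
      exact hcalc.trans (le_ciSup hBdd θ)
    · exact le_trans (norm_nonneg _) (le_ciSup hBdd 0)
  · apply ciSup_le
    intro θ
    apply sa_norm_le (sa_op A _) (nrad_nonneg A)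
    intro x
    rw [inner_reop]
    calc ‖((((starRingEnd ℂ) (Complex.exp ((θ:ℂ) * Complex.I)) * inner ℂ (A x) x).re : ℝ) : ℂ)‖
        = |((starRingEnd ℂ) (Complex.exp ((θ:ℂ) * Complex.I)) * inner ℂ (A x) x).re| := by
          rw [Complex.norm_real, Real.norm_eq_abs]
      _ ≤ ‖((starRingEnd ℂ) (Complex.exp ((θ:ℂ) * Complex.I)) * inner ℂ (A x) x)‖ :=
          Complex.abs_re_le_norm _
      _ = ‖(inner ℂ (A x) x : ℂ)‖ := by
          rw [norm_mul, Complex.norm_conj, habs, one_mul]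
      _ ≤ nrad A * ‖x‖ ^ 2 := nrad_bound A x
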